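/- For each i = 1,…,N let U_i be a unitary n×n matrix and let G_i be a linear map on n×n matrices of the form G_i(σ) = Σₐ q_i(a) W_{i,a} σ W_{i,a}† with the W_{i,a} unitary and q_i probability distributions; let W̄_i = Σₐ q_i(a)W_{i,a} and δ_i = Σₐ q_i(a)‖W_{i,a} − W̄_i‖². Then for any density matrix ρ (positive semidefinite with trace 1), the trace norm of U_N⋯U₁ ρ U₁†⋯U_N† − (G_N ∘ ⋯ ∘ G₁)(ρ) is at most Σᵢ (δ_i + 2‖W̄_i − U_i‖). -/

import Mathlib

open scoped Matrix.Norms.L2Operator ComplexOrder Kronecker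
open Matrix Complex

/-- The trace norm (sum of singular values) of a square complex matrix. -/
noncomputable def traceNorm {n : Type*} [Fintype n] [DecidableEq n] (A : Matrix n n ℂ) : ℝ :=
  (((Matrix.posSemidef_conjTranspose_mul_self A).1.eigenvectorUnitary : Matrix n n ℂ) *
      diagonal (((↑) : ℝ → ℂ) ∘ (√·) ∘ (Matrix.posSemidef_conjTranspose_mul_self A).1.eigenvalues) *
      (star (Matrix.posSemidef_conjTranspose_mul_self A).1.eigenvectorUnitary : Matrix n n ℂ)).trace.re

namespace Matrix.PosSemidef
variable {ι : Type*} [Fintype ι] [DecidableEq ι]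

noncomputable def sqrt {A : Matrix ι ι ℂ} (hA : A.PosSemidef) : Matrix ι ι ℂ :=
  (hA.1.eigenvectorUnitary : Matrix ι ι ℂ) *
      diagonal (((↑) : ℝ → ℂ) ∘ (√·) ∘ hA.1.eigenvalues) *
      (star hA.1.eigenvectorUnitary : Matrix ι ι ℂ)

lemma sqrt_eq_cfc {A : Matrix ι ι ℂ} (hA : A.PosSemidef) : hA.sqrt = cfc Real.sqrt A := by
  rw [hA.1.cfc_eq]; rfl

lemma spec_nonneg {A : Matrix ι ι ℂ} (hA : A.PosSemidef) : ∀ x ∈ spectrum ℝ A, 0 ≤ x := by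
  intro x hx
  rw [hA.1.spectrum_real_eq_range_eigenvalues] at hx
  obtain ⟨i, rfl⟩ := hx
  exact hA.eigenvalues_nonneg i

lemma posSemidef_sqrt {A : Matrix ι ι ℂ} (hA : A.PosSemidef) : hA.sqrt.PosSemidef := by
  have h := (Matrix.posSemidef_diagonal_iff.mpr fun i =>
    Complex.zero_le_real.mpr (Real.sqrt_nonneg (hA.1.eigenvalues i)) :
    (diagonal (((↑) : ℝ → ℂ) ∘ (√·) ∘ hA.1.eigenvalues)).PosSemidef).mul_mul_conjTranspose_same
    (hA.1.eigenvectorUnitary : Matrix ι ι ℂ)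
  unfold sqrt
  convert h using 1
  simp [Matrix.star_eq_conjTranspose]

lemma sqrt_mul_self {A : Matrix ι ι ℂ} (hA : A.PosSemidef) : hA.sqrt * hA.sqrt = A := by
  have hsa : IsSelfAdjoint A := hA.1
  rw [sqrt_eq_cfc, ← cfc_mul Real.sqrt Real.sqrt A]
  conv_rhs => rw [← cfc_id (R := ℝ) (a := A)]
  exact cfc_congr fun x hx => Real.mul_self_sqrt (hA.spec_nonneg x hx)

lemma sq_sqrt {A : Matrix ι ι ℂ} (hA : A.PosSemidef) : hA.sqrt ^ 2 = A := by
  rw [pow_two, sqrt_mul_self]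

lemma eq_sqrt_of_sq_eq {A B : Matrix ι ι ℂ} (hB : B.PosSemidef) (hA : A.PosSemidef)
    (h : B ^ 2 = A) : B = hA.sqrt := by
  have hsb : IsSelfAdjoint B := hB.1
  rw [sqrt_eq_cfc]
  subst h
  rw [← cfc_comp_pow Real.sqrt 2 B]
  conv_lhs => rw [← cfc_id (R := ℝ) (a := B)]
  exact cfc_congr fun x hx => (Real.sqrt_sq (hB.spec_nonneg x hx)).symm

end Matrix.PosSemidef

variable {d : ℕ}

lemma opnorm_one_le : ‖(1 : Matrix (Fin d) (Fin d) ℂ)‖ ≤ 1 := by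
  have h := Matrix.l2_opNorm_conjTranspose_mul_self (1 : Matrix (Fin d) (Fin d) ℂ)
  simp only [conjTranspose_one, mul_one] at h
  nlinarith [norm_nonneg (1 : Matrix (Fin d) (Fin d) ℂ)]

lemma opnorm_unitary_le {U : Matrix (Fin d) (Fin d) ℂ}
    (hU : U ∈ Matrix.unitaryGroup (Fin d) ℂ) : ‖U‖ ≤ 1 := by
  have h1 : Uᴴ * U = 1 := by
    rw [← Matrix.star_eq_conjTranspose]
    exact (Matrix.mem_unitaryGroup_iff'.mp hU)
  have h := Matrix.l2_opNorm_conjTranspose_mul_self U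
  rw [h1] at h
  nlinarith [norm_nonneg U, opnorm_one_le (d := d)]

/-- key PSD duality bound : Re tr (C * S) ≤ ‖C‖ * Re tr S for S PSD. -/
lemma re_trace_mul_le (C : Matrix (Fin d) (Fin d) ℂ) {S : Matrix (Fin d) (Fin d) ℂ}
    (hS : S.PosSemidef) : ((C * S).trace).re ≤ ‖C‖ * (S.trace).re := by
  classical
  set P := hS.sqrt with hPdef
  have hP : P.PosSemidef := hS.posSemidef_sqrt
  have hPH : Pᴴ = P := hP.1
  have hPP : P * P = S := hS.sqrt_mul_self
  have hij : ∀ i j, P i j = (starRingEnd ℂ) (P j i) := by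
    intro i j
    conv_lhs => rw [← hPH]
    rfl
  set v : Fin d → EuclideanSpace ℂ (Fin d) := fun i => (WithLp.equiv 2 _).symm (fun j => P j i)
    with hv
  set w : Fin d → EuclideanSpace ℂ (Fin d) :=
    fun i => (EuclideanSpace.equiv (Fin d) ℂ).symm (C *ᵥ (fun k => P k i)) with hw
  have hdiag : ∀ i, (P * (C * P)) i i = @inner ℂ _ _ (v i) (w i) := by
    intro i
    rw [Matrix.mul_apply, PiLp.inner_apply]
    refine Finset.sum_congr rfl fun j _ => ?_
    rw [RCLike.inner_apply]
    show P i j * (C * P) j i = (C *ᵥ fun k => P k i) j * (starRingEnd ℂ) (P j i)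
    rw [hij i j, Matrix.mul_apply, mul_comm]
    rfl
  have hnormv : ∀ i, ‖v i‖ ^ 2 = ((S i i).re) := by
    intro i
    rw [EuclideanSpace.norm_eq, Real.sq_sqrt (by positivity)]
    rw [← hPP, Matrix.mul_apply]
    rw [Complex.re_sum]
    refine Finset.sum_congr rfl fun j _ => ?_
    rw [hij i j]
    show ‖P j i‖ ^ 2 = ((starRingEnd ℂ) (P j i) * P j i).re
    rw [mul_comm, Complex.mul_conj, Complex.ofReal_re, ← Complex.sq_norm]
  have htr : (C * S).trace = (P * (C * P)).trace := by
    rw [← hPP, show C * (P * P) = (C * P) * P from (mul_assoc _ _ _).symm,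
      Matrix.trace_mul_comm]
  rw [htr, Matrix.trace, Complex.re_sum]
  have hbound : ∀ i, ((P * (C * P)) i i).re ≤ ‖C‖ * (S i i).re := by
    intro i
    rw [hdiag i]
    calc (@inner ℂ _ _ (v i) (w i)).re ≤ ‖@inner ℂ _ _ (v i) (w i)‖ := Complex.re_le_norm _
    _ ≤ ‖v i‖ * ‖w i‖ := norm_inner_le_norm _ _
    _ ≤ ‖v i‖ * (‖C‖ * ‖v i‖) := by
        refine mul_le_mul_of_nonneg_left ?_ (norm_nonneg _)
        exact Matrix.l2_opNorm_mulVec C (v i)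
    _ = ‖C‖ * ‖v i‖ ^ 2 := by ring
    _ = ‖C‖ * (S i i).re := by rw [hnormv i]
  calc ∑ i, ((P * (C * P)) i i).re ≤ ∑ i, ‖C‖ * (S i i).re :=
        Finset.sum_le_sum fun i _ => hbound i
  _ = ‖C‖ * (S.trace).re := by
        simp [Matrix.trace, Matrix.diag, Complex.re_sum, Finset.mul_sum]

lemma exists_polar (X : Matrix (Fin d) (Fin d) ℂ) :
    ∃ C : Matrix (Fin d) (Fin d) ℂ, ‖C‖ ≤ 1 ∧
      Cᴴ * X = (Matrix.posSemidef_conjTranspose_mul_self X).sqrt ∧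
      X = C * (Matrix.posSemidef_conjTranspose_mul_self X).sqrt := by
  classical
  set hH := Matrix.posSemidef_conjTranspose_mul_self X with hHdef
  set u : Matrix (Fin d) (Fin d) ℂ := ↑hH.1.eigenvectorUnitary with hu
  set lam : Fin d → ℝ := hH.1.eigenvalues with hlamdef
  have hlam : ∀ i, 0 ≤ lam i := hH.eigenvalues_nonneg
  have huu : uᴴ * u = 1 := by
    rw [← Matrix.star_eq_conjTranspose]
    exact Matrix.mem_unitaryGroup_iff'.mp hH.1.eigenvectorUnitary.2
  have huu' : u * uᴴ = 1 := by
    rw [← Matrix.star_eq_conjTranspose]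
    exact Matrix.mem_unitaryGroup_iff.mp hH.1.eigenvectorUnitary.2
  set E : (Fin d → ℝ) → Matrix (Fin d) (Fin d) ℂ :=
    fun f => u * diagonal (Complex.ofReal ∘ f) * uᴴ with hE
  have hHE : Xᴴ * X = E lam := hH.1.spectral_theorem
  have hEmul : ∀ a b, E a * E b = E (a * b) := by
    intro a b
    have hab : (Complex.ofReal ∘ (a * b)) = (Complex.ofReal ∘ a) * (Complex.ofReal ∘ b) := by
      funext i; simp
    show u * diagonal (Complex.ofReal ∘ a) * uᴴ * (u * diagonal (Complex.ofReal ∘ b) * uᴴ)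
      = u * diagonal (Complex.ofReal ∘ (a * b)) * uᴴ
    calc u * diagonal (Complex.ofReal ∘ a) * uᴴ * (u * diagonal (Complex.ofReal ∘ b) * uᴴ)
        = u * (diagonal (Complex.ofReal ∘ a) * (uᴴ * u) * diagonal (Complex.ofReal ∘ b)) * uᴴ := by
          noncomm_ring
    _ = u * (diagonal (Complex.ofReal ∘ a) * diagonal (Complex.ofReal ∘ b)) * uᴴ := by
          rw [huu, mul_one]
    _ = u * diagonal (Complex.ofReal ∘ (a * b)) * uᴴ := by
          rw [Matrix.diagonal_mul_diagonal]
          have h2 : (fun i => (Complex.ofReal ∘ a) i * (Complex.ofReal ∘ b) i)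
              = (Complex.ofReal ∘ (a * b)) := by funext i; simp
          rw [h2]
  have hEstar : ∀ a, (E a)ᴴ = E a := by
    intro a
    have hst : star (Complex.ofReal ∘ a) = (Complex.ofReal ∘ a) := by
      funext i; simp [Complex.conj_ofReal]
    show (u * diagonal (Complex.ofReal ∘ a) * uᴴ)ᴴ = u * diagonal (Complex.ofReal ∘ a) * uᴴ
    rw [Matrix.conjTranspose_mul, Matrix.conjTranspose_mul, Matrix.conjTranspose_conjTranspose,
      Matrix.diagonal_conjTranspose, hst, Matrix.mul_assoc]
  have hEpsd : ∀ a, (∀ i, 0 ≤ a i) → (E a).PosSemidef := by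
    intro a ha
    refine Matrix.PosSemidef.mul_mul_conjTranspose_same ?_ u
    refine Matrix.posSemidef_diagonal_iff.mpr fun i => ?_
    simpa using Complex.zero_le_real.mpr (ha i)
  set s : Fin d → ℝ := fun i => Real.sqrt (lam i) with hs
  set g : Fin d → ℝ := fun i => if lam i = 0 then 0 else (Real.sqrt (lam i))⁻¹ with hg
  have hss : s * s = lam := by
    funext i
    exact Real.mul_self_sqrt (hlam i)
  have hsqrt : hH.sqrt = E s := by
    symm
    refine Matrix.PosSemidef.eq_sqrt_of_sq_eq (hEpsd s fun i => Real.sqrt_nonneg _) hH ?_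
    rw [pow_two, hEmul, hss]
    exact hHE.symm
  have hgs : g * s = fun i => if lam i = 0 then 0 else 1 := by
    funext i
    by_cases h0 : lam i = 0
    · simp [hg, hs, h0]
    · have : Real.sqrt (lam i) ≠ 0 := by
        simp [Real.sqrt_eq_zero (hlam i), h0]
      simp [hg, hs, h0, inv_mul_cancel₀ this]
  have hglam : g * lam = s := by
    funext i
    by_cases h0 : lam i = 0
    · simp [hg, hs, h0]
    · have hne : Real.sqrt (lam i) ≠ 0 := by
        simp [Real.sqrt_eq_zero (hlam i), h0]
      simp only [hg, hs, Pi.mul_apply, if_neg h0]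
      rw [← Real.mul_self_sqrt (hlam i)]
      field_simp
      rw [Real.sqrt_sq (Real.sqrt_nonneg _)]
  refine ⟨X * E g, ?_, ?_, ?_⟩
  · -- norm bound
    have hCC : (X * E g)ᴴ * (X * E g) = E (g * s) := by
      rw [Matrix.conjTranspose_mul, hEstar]
      calc E g * Xᴴ * (X * E g) = E g * (Xᴴ * X) * E g := by noncomm_ring
      _ = E g * E lam * E g := by rw [hHE]
      _ = E (g * lam * g) := by rw [hEmul, hEmul]
      _ = E (g * s) := by rw [hglam, mul_comm s g]
    set p := E (g * s) with hp
    have hxx : (g * s) * (g * s) = g * s := by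
      rw [hgs]
      funext i
      by_cases h0 : lam i = 0 <;> simp [h0]
    have hpp : p * p = p := by rw [hp, hEmul, hxx]
    have hpstar : pᴴ = p := hEstar _
    have hpnorm : ‖p‖ ≤ 1 := by
      have h1 : ‖pᴴ * p‖ = ‖p‖ * ‖p‖ := Matrix.l2_opNorm_conjTranspose_mul_self p
      rw [hpstar, hpp] at h1
      nlinarith [norm_nonneg p]
    have h2 : ‖(X * E g)ᴴ * (X * E g)‖ = ‖X * E g‖ * ‖X * E g‖ :=
      Matrix.l2_opNorm_conjTranspose_mul_self _
    rw [hCC] at h2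
    nlinarith [norm_nonneg (X * E g), norm_nonneg p]
  · -- Cᴴ X = sqrt
    rw [Matrix.conjTranspose_mul, hEstar, Matrix.mul_assoc, hsqrt, hHE, hEmul, hglam]
  · -- X = C * sqrt
    rw [hsqrt, Matrix.mul_assoc, hEmul, hgs]
    set chi : Fin d → ℝ := fun i => if lam i = 0 then 0 else 1 with hchi
    set M := X * u with hM
    have hMM : Mᴴ * M = diagonal (Complex.ofReal ∘ lam) := by
      have h1 : Mᴴ * M = uᴴ * (Xᴴ * X) * u := by
        rw [hM, Matrix.conjTranspose_mul]; noncomm_ring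
      rw [h1, hHE]
      show uᴴ * (u * diagonal (Complex.ofReal ∘ lam) * uᴴ) * u = diagonal (Complex.ofReal ∘ lam)
      calc uᴴ * (u * diagonal (Complex.ofReal ∘ lam) * uᴴ) * u
          = (uᴴ * u) * diagonal (Complex.ofReal ∘ lam) * (uᴴ * u) := by noncomm_ring
      _ = diagonal (Complex.ofReal ∘ lam) := by rw [huu, one_mul, mul_one]
    have hMzero : ∀ i j, lam j = 0 → M i j = 0 := by
      intro i j h0
      have h1 : (Mᴴ * M) j j = 0 := by rw [hMM]; simp [h0]
      rw [Matrix.mul_apply] at h1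
      have h2 : ∑ i, (Complex.normSq (M i j) : ℂ) = 0 := by
        rw [← h1]
        refine Finset.sum_congr rfl fun i _ => ?_
        rw [Matrix.conjTranspose_apply, Complex.star_def, mul_comm, Complex.mul_conj]
      have h3 : ∑ i, Complex.normSq (M i j) = 0 := by exact_mod_cast h2
      have h4 := (Finset.sum_eq_zero_iff_of_nonneg
        (fun i _ => Complex.normSq_nonneg (M i j))).mp h3 i (Finset.mem_univ i)
      exact Complex.normSq_eq_zero.mp h4
    have hMchi : M * diagonal (Complex.ofReal ∘ chi) = M := by
      ext i j
      rw [Matrix.mul_diagonal]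
      by_cases h0 : lam j = 0
      · simp [hchi, h0, hMzero i j h0]
      · simp [hchi, h0]
    calc X = X * (u * uᴴ) := by rw [huu', mul_one]
    _ = (M * diagonal (Complex.ofReal ∘ chi)) * uᴴ := by
        rw [hMchi, hM, Matrix.mul_assoc]
    _ = X * E chi := by
        show _ = X * (u * diagonal (Complex.ofReal ∘ chi) * uᴴ)
        rw [hM]; noncomm_ring

lemma trace_re_nonneg {S : Matrix (Fin d) (Fin d) ℂ} (hS : S.PosSemidef) : 0 ≤ (S.trace).re := by
  rw [Matrix.trace, Complex.re_sum]
  refine Finset.sum_nonneg fun i _ => ?_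
  have h := (Matrix.posSemidef_iff_dotProduct_mulVec.mp hS).2 (Pi.single i 1)
  have hdd : (dotProduct (star (Pi.single i 1)) (S *ᵥ Pi.single i 1)) = S i i := by
    simp [dotProduct, Matrix.mulVec, Pi.single_apply]
  rw [hdd] at h
  exact (Complex.le_def.mp h).1

lemma traceNorm_nonneg (A : Matrix (Fin d) (Fin d) ℂ) : 0 ≤ traceNorm A :=
  trace_re_nonneg (Matrix.posSemidef_conjTranspose_mul_self A).posSemidef_sqrt

lemma re_trace_le_traceNorm (B A : Matrix (Fin d) (Fin d) ℂ) :
    ((B * A).trace).re ≤ ‖B‖ * traceNorm A := by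
  obtain ⟨C, hC, hCA, hXA⟩ := exists_polar A
  set P := (Matrix.posSemidef_conjTranspose_mul_self A).sqrt with hP
  have hBC : ‖B * C‖ ≤ ‖B‖ := by
    have h1 : ‖B * C‖ ≤ ‖B‖ * ‖C‖ := Matrix.l2_opNorm_mul B C
    nlinarith [norm_nonneg B]
  calc ((B * A).trace).re = (((B * C) * P).trace).re := by
        conv_lhs => rw [hXA]
        rw [mul_assoc]
  _ ≤ ‖B * C‖ * (P.trace).re := re_trace_mul_le _
        (Matrix.posSemidef_conjTranspose_mul_self A).posSemidef_sqrt
  _ ≤ ‖B‖ * traceNorm A := by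
      have h2 : (P.trace).re = traceNorm A := rfl
      rw [h2]
      exact mul_le_mul_of_nonneg_right hBC (traceNorm_nonneg A)

lemma traceNorm_triangle (A B : Matrix (Fin d) (Fin d) ℂ) :
    traceNorm (A + B) ≤ traceNorm A + traceNorm B := by
  obtain ⟨C, hC, hCA, _⟩ := exists_polar (A + B)
  have key : traceNorm (A + B) = ((Cᴴ * (A + B)).trace).re := by rw [hCA]; rfl
  have hCH : ‖Cᴴ‖ ≤ 1 := by rw [Matrix.l2_opNorm_conjTranspose]; exact hC
  have h1 := re_trace_le_traceNorm Cᴴ A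
  have h2 := re_trace_le_traceNorm Cᴴ B
  rw [key, mul_add, Matrix.trace_add, Complex.add_re]
  nlinarith [traceNorm_nonneg A, traceNorm_nonneg B, norm_nonneg Cᴴ]

lemma traceNorm_smul_le {c : ℝ} (hc : 0 ≤ c) (A : Matrix (Fin d) (Fin d) ℂ) :
    traceNorm ((c : ℂ) • A) ≤ c * traceNorm A := by
  obtain ⟨C, hC, hCA, _⟩ := exists_polar ((c : ℂ) • A)
  have key : traceNorm ((c : ℂ) • A) = ((Cᴴ * ((c : ℂ) • A)).trace).re := by rw [hCA]; rfl
  have hCH : ‖Cᴴ‖ ≤ 1 := by rw [Matrix.l2_opNorm_conjTranspose]; exact hC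
  have h1 := re_trace_le_traceNorm Cᴴ A
  rw [key, Matrix.mul_smul, Matrix.trace_smul, smul_eq_mul, Complex.mul_re,
    Complex.ofReal_re, Complex.ofReal_im]
  simp only [zero_mul, sub_zero]
  have h2 : ((Cᴴ * A).trace).re ≤ traceNorm A := by
    nlinarith [traceNorm_nonneg A]
  exact mul_le_mul_of_nonneg_left h2 hc

lemma traceNorm_conj_le (L A R : Matrix (Fin d) (Fin d) ℂ) :
    traceNorm (L * A * R) ≤ ‖L‖ * ‖R‖ * traceNorm A := by
  obtain ⟨C, hC, hCA, _⟩ := exists_polar (L * A * R)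
  obtain ⟨C', hC', _, hA'⟩ := exists_polar A
  set P' := (Matrix.posSemidef_conjTranspose_mul_self A).sqrt with hP'
  have key : traceNorm (L * A * R) = ((Cᴴ * (L * A * R)).trace).re := by rw [hCA]; rfl
  have hCH : ‖Cᴴ‖ ≤ 1 := by rw [Matrix.l2_opNorm_conjTranspose]; exact hC
  have hre : ((Cᴴ * (L * A * R)).trace).re = (((R * Cᴴ * L * C') * P').trace).re := by
    have e1 : Cᴴ * (L * A * R) = (Cᴴ * L * C' * P') * R := by rw [hA']; noncomm_ring
    have e2 : R * (Cᴴ * L * C' * P') = (R * Cᴴ * L * C') * P' := by noncomm_ring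
    rw [e1, Matrix.trace_mul_comm, e2]
  have hnorm : ‖R * Cᴴ * L * C'‖ ≤ ‖L‖ * ‖R‖ := by
    have a1 : ‖R * Cᴴ * L * C'‖ ≤ ‖R * Cᴴ * L‖ * ‖C'‖ := Matrix.l2_opNorm_mul _ _
    have a2 : ‖R * Cᴴ * L‖ ≤ ‖R * Cᴴ‖ * ‖L‖ := Matrix.l2_opNorm_mul _ _
    have a3 : ‖R * Cᴴ‖ ≤ ‖R‖ * ‖Cᴴ‖ := Matrix.l2_opNorm_mul _ _
    have a4 : ‖R * Cᴴ‖ ≤ ‖R‖ := by nlinarith [norm_nonneg R]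
    have a5 : ‖R * Cᴴ * L‖ ≤ ‖R‖ * ‖L‖ :=
      le_trans a2 (mul_le_mul_of_nonneg_right a4 (norm_nonneg L))
    have a6 : ‖R * Cᴴ * L * C'‖ ≤ ‖R * Cᴴ * L‖ := by
      nlinarith [norm_nonneg (R * Cᴴ * L)]
    nlinarith [mul_comm ‖L‖ ‖R‖]
  have hfin := re_trace_mul_le (R * Cᴴ * L * C')
    (Matrix.posSemidef_conjTranspose_mul_self A).posSemidef_sqrt
  have htr : (P'.trace).re = traceNorm A := rfl
  rw [key, hre]
  calc (((R * Cᴴ * L * C') * P').trace).re ≤ ‖R * Cᴴ * L * C'‖ * (P'.trace).re := hfin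
  _ ≤ ‖L‖ * ‖R‖ * traceNorm A := by
      rw [htr]
      exact mul_le_mul_of_nonneg_right hnorm (traceNorm_nonneg A)

lemma traceNorm_psd {S : Matrix (Fin d) (Fin d) ℂ} (hS : S.PosSemidef) :
    traceNorm S = (S.trace).re := by
  have h : S = (Matrix.posSemidef_conjTranspose_mul_self S).sqrt := by
    refine hS.eq_sqrt_of_sq_eq _ ?_
    rw [pow_two, hS.1]
  show (((Matrix.posSemidef_conjTranspose_mul_self S).sqrt).trace).re = _
  rw [← h]

lemma traceNorm_zero : traceNorm (0 : Matrix (Fin d) (Fin d) ℂ) = 0 := by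
  rw [traceNorm_psd Matrix.PosSemidef.zero]
  simp

lemma traceNorm_sum_le {ι : Type*} (s : Finset ι) (f : ι → Matrix (Fin d) (Fin d) ℂ) :
    traceNorm (∑ i ∈ s, f i) ≤ ∑ i ∈ s, traceNorm (f i) := by
  classical
  induction s using Finset.induction with
  | empty => simp [traceNorm_zero]
  | insert x s' hx ih =>
    rw [Finset.sum_insert hx, Finset.sum_insert hx]
    exact le_trans (traceNorm_triangle _ _) (by linarith)

lemma traceNorm_neg (X : Matrix (Fin d) (Fin d) ℂ) : traceNorm (-X) = traceNorm X := by
  have h : (Matrix.posSemidef_conjTranspose_mul_self X).sqrt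
      = (Matrix.posSemidef_conjTranspose_mul_self (-X)).sqrt := by
    refine Matrix.PosSemidef.eq_sqrt_of_sq_eq
      (Matrix.posSemidef_conjTranspose_mul_self X).posSemidef_sqrt _ ?_
    rw [Matrix.PosSemidef.sq_sqrt]
    simp
  show ((Matrix.posSemidef_conjTranspose_mul_self (-X)).sqrt.trace).re = _
  rw [← h]
  rfl

noncomputable def conjEnd (A : Matrix (Fin d) (Fin d) ℂ) :
    Module.End ℂ (Matrix (Fin d) (Fin d) ℂ) where
  toFun σ := A * σ * Aᴴ
  map_add' x y := by noncomm_ring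
  map_smul' c x := by simp [Matrix.mul_smul, Matrix.smul_mul]

lemma conjEnd_apply (A σ : Matrix (Fin d) (Fin d) ℂ) : conjEnd A σ = A * σ * Aᴴ := rfl

lemma prod_conjEnd (l : List (Matrix (Fin d) (Fin d) ℂ)) (ρ : Matrix (Fin d) (Fin d) ℂ) :
    (l.map conjEnd).prod ρ = l.prod * ρ * (l.prod)ᴴ := by
  induction l with
  | nil => simp [Module.End.one_apply]
  | cons a t ih =>
    simp only [List.map_cons, List.prod_cons, Module.End.mul_apply, ih, conjEnd_apply,
      Matrix.conjTranspose_mul]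
    noncomm_ring

lemma telescope
    (l : List ((Matrix (Fin d) (Fin d) ℂ) × (Module.End ℂ (Matrix (Fin d) (Fin d) ℂ)) × ℝ))
    (hmem : ∀ p ∈ l, p.1 ∈ Matrix.unitaryGroup (Fin d) ℂ ∧
       (∀ X, traceNorm (p.2.1 X) ≤ traceNorm X) ∧
       (∀ σ : Matrix (Fin d) (Fin d) ℂ, σ.PosSemidef → σ.trace = 1 →
         traceNorm (p.1 * σ * p.1ᴴ - p.2.1 σ) ≤ p.2.2))
    (ρ : Matrix (Fin d) (Fin d) ℂ) (hρ : ρ.PosSemidef) (hρ1 : ρ.trace = 1) :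
    traceNorm ((l.map (fun p => conjEnd p.1)).prod ρ - (l.map (fun p => p.2.1)).prod ρ)
      ≤ (l.map (fun p => p.2.2)).sum := by
  induction l with
  | nil => simp [Module.End.one_apply, traceNorm_zero]
  | cons p t ih =>
    have ih' := ih (fun q hq => hmem q (List.mem_cons_of_mem _ hq))
    obtain ⟨hu, hcontr, hstep⟩ := hmem p List.mem_cons_self
    set σ := (t.map (fun p => conjEnd p.1)).prod ρ with hσdef
    have hσeq : σ = (t.map Prod.fst).prod * ρ * ((t.map Prod.fst).prod)ᴴ := by
      rw [hσdef, ← prod_conjEnd]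
      congr 1
      rw [List.map_map]
      rfl
    have htu : (t.map Prod.fst).prod ∈ Matrix.unitaryGroup (Fin d) ℂ := by
      refine Submonoid.list_prod_mem _ fun x hx => ?_
      obtain ⟨pq, hpq, rfl⟩ := List.mem_map.mp hx
      exact (hmem pq (List.mem_cons_of_mem _ hpq)).1
    have hσpsd : σ.PosSemidef := by
      rw [hσeq]; exact hρ.mul_mul_conjTranspose_same _
    have hσ1 : σ.trace = 1 := by
      rw [hσeq, Matrix.trace_mul_cycle, ← Matrix.star_eq_conjTranspose,
        Matrix.mem_unitaryGroup_iff'.mp htu, one_mul, hρ1]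
    have hdecomp : (((p :: t).map (fun p => conjEnd p.1)).prod ρ
          - ((p :: t).map (fun p => p.2.1)).prod ρ)
        = (p.1 * σ * p.1ᴴ - p.2.1 σ)
          + p.2.1 (σ - (t.map (fun p => p.2.1)).prod ρ) := by
      simp only [List.map_cons, List.prod_cons, Module.End.mul_apply, map_sub, ← hσdef,
        conjEnd_apply]
      abel
    rw [hdecomp, List.map_cons, List.sum_cons]
    refine le_trans (traceNorm_triangle _ _) ?_
    have h1 := hstep σ hσpsd hσ1
    have h2 := le_trans (hcontr (σ - (t.map (fun p => p.2.1)).prod ρ)) ih'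
    linarith

section channel
variable {m : ℕ}

lemma opnorm_wbar_le (W : Fin m → Matrix (Fin d) (Fin d) ℂ)
    (hW : ∀ a, W a ∈ Matrix.unitaryGroup (Fin d) ℂ)
    (q : Fin m → ℝ) (hq0 : ∀ a, 0 ≤ q a) (hq1 : ∑ a, q a = 1) :
    ‖∑ a, (q a : ℂ) • W a‖ ≤ 1 := by
  calc ‖∑ a, (q a : ℂ) • W a‖ ≤ ∑ a, ‖(q a : ℂ) • W a‖ := norm_sum_le _ _
  _ ≤ ∑ a, q a := by
      refine Finset.sum_le_sum fun a _ => ?_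
      rw [norm_smul, Complex.norm_real, Real.norm_eq_abs, _root_.abs_of_nonneg (hq0 a)]
      have := opnorm_unitary_le (hW a)
      nlinarith [hq0 a, norm_nonneg (W a)]
  _ = 1 := hq1

lemma contraction_G (W : Fin m → Matrix (Fin d) (Fin d) ℂ)
    (hW : ∀ a, W a ∈ Matrix.unitaryGroup (Fin d) ℂ)
    (q : Fin m → ℝ) (hq0 : ∀ a, 0 ≤ q a) (hq1 : ∑ a, q a = 1)
    (X : Matrix (Fin d) (Fin d) ℂ) :
    traceNorm (∑ a, (q a : ℂ) • (W a * X * (W a)ᴴ)) ≤ traceNorm X := by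
  calc traceNorm (∑ a, (q a : ℂ) • (W a * X * (W a)ᴴ))
      ≤ ∑ a, traceNorm ((q a : ℂ) • (W a * X * (W a)ᴴ)) := traceNorm_sum_le _ _
  _ ≤ ∑ a, q a * traceNorm X := by
      refine Finset.sum_le_sum fun a _ => ?_
      refine le_trans (traceNorm_smul_le (hq0 a) _) ?_
      refine mul_le_mul_of_nonneg_left ?_ (hq0 a)
      refine le_trans (traceNorm_conj_le _ _ _) ?_
      have h1 : ‖W a‖ ≤ 1 := opnorm_unitary_le (hW a)
      have h2 : ‖(W a)ᴴ‖ ≤ 1 := by rw [Matrix.l2_opNorm_conjTranspose]; exact h1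
      have h3 : ‖W a‖ * ‖(W a)ᴴ‖ ≤ 1 := by
        nlinarith [norm_nonneg (W a), norm_nonneg (W a)ᴴ]
      nlinarith [traceNorm_nonneg X, h3]
  _ = traceNorm X := by rw [← Finset.sum_mul, hq1, one_mul]

lemma step_bound (Um : Matrix (Fin d) (Fin d) ℂ) (hU : Um ∈ Matrix.unitaryGroup (Fin d) ℂ)
    (W : Fin m → Matrix (Fin d) (Fin d) ℂ) (hW : ∀ a, W a ∈ Matrix.unitaryGroup (Fin d) ℂ)
    (q : Fin m → ℝ) (hq0 : ∀ a, 0 ≤ q a) (hq1 : ∑ a, q a = 1)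
    (Wb : Matrix (Fin d) (Fin d) ℂ) (hWb : Wb = ∑ a, (q a : ℂ) • W a)
    (σ : Matrix (Fin d) (Fin d) ℂ) (hσ : σ.PosSemidef) (hσ1 : σ.trace = 1) :
    traceNorm (Um * σ * Umᴴ - ∑ a, (q a : ℂ) • (W a * σ * (W a)ᴴ))
      ≤ (∑ a, q a * ‖W a - Wb‖ ^ 2) + 2 * ‖Wb - Um‖ := by
  have hq1C : ∑ a, (q a : ℂ) = 1 := by
    rw [← Complex.ofReal_sum, hq1, Complex.ofReal_one]
  have hWbH : Wbᴴ = ∑ a, (q a : ℂ) • (W a)ᴴ := by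
    rw [hWb, Matrix.conjTranspose_sum]
    refine Finset.sum_congr rfl fun a _ => ?_
    rw [Matrix.conjTranspose_smul, Complex.star_def, Complex.conj_ofReal]
  have hsum1 : ∑ a, (q a : ℂ) • (W a * σ * Wbᴴ) = Wb * σ * Wbᴴ := by
    calc ∑ a, (q a : ℂ) • (W a * σ * Wbᴴ) = ∑ a, ((q a : ℂ) • W a) * (σ * Wbᴴ) := by
          refine Finset.sum_congr rfl fun a _ => ?_
          rw [smul_mul_assoc, mul_assoc]
    _ = (∑ a, (q a : ℂ) • W a) * (σ * Wbᴴ) := by rw [Finset.sum_mul]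
    _ = Wb * σ * Wbᴴ := by rw [← hWb, mul_assoc]
  have hsum2 : ∑ a, (q a : ℂ) • (Wb * σ * (W a)ᴴ) = Wb * σ * Wbᴴ := by
    calc ∑ a, (q a : ℂ) • (Wb * σ * (W a)ᴴ) = ∑ a, (Wb * σ) * ((q a : ℂ) • (W a)ᴴ) := by
          refine Finset.sum_congr rfl fun a _ => ?_
          rw [mul_smul_comm, mul_assoc]
    _ = (Wb * σ) * (∑ a, (q a : ℂ) • (W a)ᴴ) := by rw [Finset.mul_sum]
    _ = Wb * σ * Wbᴴ := by rw [← hWbH]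
  have hsum3 : ∑ a, (q a : ℂ) • (Wb * σ * Wbᴴ) = Wb * σ * Wbᴴ := by
    rw [← Finset.sum_smul, hq1C, one_smul]
  have expand : ∀ a, (W a - Wb) * σ * (W a - Wb)ᴴ
      = W a * σ * (W a)ᴴ - W a * σ * Wbᴴ - Wb * σ * (W a)ᴴ + Wb * σ * Wbᴴ := by
    intro a; rw [Matrix.conjTranspose_sub]; noncomm_ring
  have hsplit : ∑ a, (q a : ℂ) • ((W a - Wb) * σ * (W a - Wb)ᴴ)
      = (∑ a, (q a : ℂ) • (W a * σ * (W a)ᴴ)) - Wb * σ * Wbᴴ := by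
    simp only [expand, smul_sub, smul_add]
    rw [Finset.sum_add_distrib, Finset.sum_sub_distrib, Finset.sum_sub_distrib,
      hsum1, hsum2, hsum3]
    abel
  have key : Um * σ * Umᴴ - ∑ a, (q a : ℂ) • (W a * σ * (W a)ᴴ)
      = ((Um - Wb) * σ * Umᴴ + Wb * σ * (Um - Wb)ᴴ)
        + -(∑ a, (q a : ℂ) • ((W a - Wb) * σ * (W a - Wb)ᴴ)) := by
    rw [hsplit, Matrix.conjTranspose_sub]
    noncomm_ring
  have htnσ : traceNorm σ = 1 := by rw [traceNorm_psd hσ, hσ1, Complex.one_re]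
  have hUn : ‖Umᴴ‖ ≤ 1 := by
    rw [Matrix.l2_opNorm_conjTranspose]; exact opnorm_unitary_le hU
  have hWbn : ‖Wb‖ ≤ 1 := by rw [hWb]; exact opnorm_wbar_le W hW q hq0 hq1
  have b1 : traceNorm ((Um - Wb) * σ * Umᴴ) ≤ ‖Wb - Um‖ := by
    refine le_trans (traceNorm_conj_le _ _ _) ?_
    rw [htnσ, mul_one, norm_sub_rev Wb Um]
    nlinarith [norm_nonneg (Um - Wb)]
  have b2 : traceNorm (Wb * σ * (Um - Wb)ᴴ) ≤ ‖Wb - Um‖ := by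
    refine le_trans (traceNorm_conj_le _ _ _) ?_
    rw [htnσ, mul_one, Matrix.l2_opNorm_conjTranspose, norm_sub_rev Um Wb]
    nlinarith [norm_nonneg (Wb - Um)]
  have b3 : traceNorm (∑ a, (q a : ℂ) • ((W a - Wb) * σ * (W a - Wb)ᴴ))
      ≤ ∑ a, q a * ‖W a - Wb‖ ^ 2 := by
    refine le_trans (traceNorm_sum_le _ _) (Finset.sum_le_sum fun a _ => ?_)
    refine le_trans (traceNorm_smul_le (hq0 a) _) ?_
    refine mul_le_mul_of_nonneg_left ?_ (hq0 a)
    refine le_trans (traceNorm_conj_le _ _ _) ?_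
    rw [htnσ, mul_one, Matrix.l2_opNorm_conjTranspose, pow_two]
  rw [key]
  refine le_trans (traceNorm_triangle _ _) ?_
  have hneg := traceNorm_neg (∑ a, (q a : ℂ) • ((W a - Wb) * σ * (W a - Wb)ᴴ))
  refine le_trans (add_le_add (traceNorm_triangle _ _) (le_of_eq hneg)) ?_
  linarith

end channel


theorem stmt_5 {n N : ℕ} (k : Fin N → ℕ)
    (U : Fin N → Matrix (Fin n) (Fin n) ℂ)
    (hU : ∀ i, U i ∈ Matrix.unitaryGroup (Fin n) ℂ)
    (W : ∀ i : Fin N, Fin (k i) → Matrix (Fin n) (Fin n) ℂ)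
    (hW : ∀ i a, W i a ∈ Matrix.unitaryGroup (Fin n) ℂ)
    (q : ∀ i : Fin N, Fin (k i) → ℝ)
    (hq0 : ∀ i a, 0 ≤ q i a) (hq1 : ∀ i, ∑ a, q i a = 1)
    (Wbar : Fin N → Matrix (Fin n) (Fin n) ℂ)
    (hWbar : ∀ i, Wbar i = ∑ a, (q i a : ℂ) • W i a)
    (δ : Fin N → ℝ) (hδ : ∀ i, δ i = ∑ a, q i a * ‖W i a - Wbar i‖ ^ 2)
    (G : Fin N → Module.End ℂ (Matrix (Fin n) (Fin n) ℂ))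
    (hG : ∀ i σ, G i σ = ∑ a, (q i a : ℂ) • (W i a * σ * (W i a)ᴴ))
    (ρ : Matrix (Fin n) (Fin n) ℂ) (hρ : ρ.PosSemidef) (hρ1 : ρ.trace = 1) :
    traceNorm ((List.ofFn U).prod * ρ * ((List.ofFn U).prod)ᴴ - (List.ofFn G).prod ρ) ≤
      ∑ i, (δ i + 2 * ‖Wbar i - U i‖) := by
  classical
  set l : List ((Matrix (Fin n) (Fin n) ℂ) × (Module.End ℂ (Matrix (Fin n) (Fin n) ℂ)) × ℝ) :=
    List.ofFn (fun i => (U i, G i, δ i + 2 * ‖Wbar i - U i‖)) with hl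
  have hmap1 : l.map (fun p => conjEnd p.1) = (List.ofFn U).map conjEnd := by
    rw [hl, List.map_ofFn, List.map_ofFn]; rfl
  have hmap2 : l.map (fun p => p.2.1) = List.ofFn G := by
    rw [hl, List.map_ofFn]; rfl
  have hmap3 : (l.map (fun p => p.2.2)).sum = ∑ i, (δ i + 2 * ‖Wbar i - U i‖) := by
    rw [hl, List.map_ofFn, List.sum_ofFn]
    rfl
  have hgoal_lhs : (List.ofFn U).prod * ρ * ((List.ofFn U).prod)ᴴ
      = (l.map (fun p => conjEnd p.1)).prod ρ := by
    rw [hmap1, prod_conjEnd]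
  have hmem : ∀ p ∈ l, p.1 ∈ Matrix.unitaryGroup (Fin n) ℂ ∧
      (∀ X, traceNorm (p.2.1 X) ≤ traceNorm X) ∧
      (∀ σ : Matrix (Fin n) (Fin n) ℂ, σ.PosSemidef → σ.trace = 1 →
        traceNorm (p.1 * σ * p.1ᴴ - p.2.1 σ) ≤ p.2.2) := by
    intro p hp
    rw [hl, List.mem_ofFn] at hp
    obtain ⟨i, rfl⟩ := hp
    refine ⟨hU i, ?_, ?_⟩
    · intro X
      show traceNorm (G i X) ≤ _
      rw [hG i X]
      exact contraction_G (W i) (hW i) (q i) (hq0 i) (hq1 i) X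
    · intro σ hσ hσ1
      show traceNorm (U i * σ * (U i)ᴴ - G i σ) ≤ δ i + 2 * ‖Wbar i - U i‖
      rw [hG i σ, hδ i]
      exact step_bound (U i) (hU i) (W i) (hW i) (q i) (hq0 i) (hq1 i) (Wbar i) (hWbar i)
        σ hσ hσ1
  rw [hgoal_lhs, ← hmap2, ← hmap3]
  exact telescope l hmem ρ hρ hρ1
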